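/- With notation as above, if |∠(n_j, R_r v_k) − π/2| ≤ ε, then |∠(n_j, R_{r₀} v_k) − π/2| ≤ ε + μ, whenever ∠(R_r v_k, R_{r₀} v_k) ≤ μ. Consequently the relaxed count E_U(r₀) = Σ_j max_k ⟦|∠(n_j, R_{r₀} v_k) − π/2| ≤ ε + μ⟧ is an upper bound for the objective E(R_r) = Σ_j max_k ⟦|∠(n_j, R_r v_k) − π/2| ≤ ε⟧ for every r in the rotation cube of side δ_r centered at r₀, where μ = min(√3·δ_r/2, π). -/

import Mathlib

open Matrix

noncomputable def dot3 (u w : Fin 3 → ℝ) : ℝ := ∑ i, u i * w i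

noncomputable def norm3 (u : Fin 3 → ℝ) : ℝ := Real.sqrt (dot3 u u)

/-- Angle between two vectors in ℝ³, in [0, π]. -/
noncomputable def vangle (u w : Fin 3 → ℝ) : ℝ :=
  Real.arccos (dot3 u w / (norm3 u * norm3 w))

/-- Cross-product (skew-symmetric) matrix of a vector. -/
def crossMat (b : Fin 3 → ℝ) : Matrix (Fin 3) (Fin 3) ℝ :=
  !![0, -b 2, b 1; b 2, 0, -b 0; -b 1, b 0, 0]

/-- Rotation matrix of an axis-angle vector, via the matrix exponential. -/
noncomputable def axisAngleRot (a : Fin 3 → ℝ) : Matrix (Fin 3) (Fin 3) ℝ :=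
  NormedSpace.exp (crossMat a)

lemma dot3_comm (u w : Fin 3 → ℝ) : dot3 u w = dot3 w u := by
  simp [dot3, mul_comm]

lemma dot3_self_nonneg (u : Fin 3 → ℝ) : 0 ≤ dot3 u u := by
  simp only [dot3, Fin.sum_univ_three, ← sq]; positivity

lemma norm3_nonneg (u : Fin 3 → ℝ) : 0 ≤ norm3 u := Real.sqrt_nonneg _

lemma sq_norm3 (u : Fin 3 → ℝ) : norm3 u ^ 2 = dot3 u u := by
  rw [norm3, Real.sq_sqrt (dot3_self_nonneg u)]

lemma dot3_self_of_unit {u : Fin 3 → ℝ} (h : norm3 u = 1) : dot3 u u = 1 := by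
  rw [← sq_norm3, h, one_pow]

lemma dot3_cauchy (u w : Fin 3 → ℝ) : |dot3 u w| ≤ norm3 u * norm3 w := by
  have h1 : (dot3 u w) ^ 2 ≤ dot3 u u * dot3 w w := by
    simp only [dot3, Fin.sum_univ_three]
    nlinarith [sq_nonneg (u 0 * w 1 - u 1 * w 0), sq_nonneg (u 0 * w 2 - u 2 * w 0),
      sq_nonneg (u 1 * w 2 - u 2 * w 1)]
  have h2 : norm3 u * norm3 w = Real.sqrt (dot3 u u * dot3 w w) := by
    rw [norm3, norm3, Real.sqrt_mul (dot3_self_nonneg u)]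
  rw [h2, ← Real.sqrt_sq_eq_abs]
  exact Real.sqrt_le_sqrt h1

lemma dot3_le_one {u w : Fin 3 → ℝ} (hu : norm3 u = 1) (hw : norm3 w = 1) :
    |dot3 u w| ≤ 1 := by
  have := dot3_cauchy u w; rwa [hu, hw, mul_one] at this

lemma vangle_comm (u w : Fin 3 → ℝ) : vangle u w = vangle w u := by
  rw [vangle, vangle, dot3_comm, mul_comm]

lemma vangle_nonneg (u w : Fin 3 → ℝ) : 0 ≤ vangle u w := Real.arccos_nonneg _

lemma vangle_le_pi (u w : Fin 3 → ℝ) : vangle u w ≤ Real.pi := Real.arccos_le_pi _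

lemma vangle_of_unit {u w : Fin 3 → ℝ} (hu : norm3 u = 1) (hw : norm3 w = 1) :
    vangle u w = Real.arccos (dot3 u w) := by
  rw [vangle, hu, hw, mul_one, div_one]

lemma cos_vangle {u w : Fin 3 → ℝ} (hu : norm3 u = 1) (hw : norm3 w = 1) :
    Real.cos (vangle u w) = dot3 u w := by
  rw [vangle_of_unit hu hw, Real.cos_arccos]
  · linarith [abs_le.1 (dot3_le_one hu hw)]
  · linarith [abs_le.1 (dot3_le_one hu hw)]

lemma dot3_smul_right (u w : Fin 3 → ℝ) (c : ℝ) : dot3 u (c • w) = c * dot3 u w := by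
  simp [dot3, Fin.sum_univ_three]; ring

lemma dot3_sub_right (u w x : Fin 3 → ℝ) : dot3 u (w - x) = dot3 u w - dot3 u x := by
  simp [dot3, Fin.sum_univ_three]; ring

lemma dot3_expand (x y z : Fin 3 → ℝ) (c e : ℝ) :
    dot3 (x - c • y) (z - e • y) =
      dot3 x z - e * dot3 x y - c * dot3 y z + c * e * dot3 y y := by
  simp only [dot3, Fin.sum_univ_three, Pi.sub_apply, Pi.smul_apply, smul_eq_mul,
    dot3_comm]
  ring

lemma arccos_le_arccos' {x y : ℝ} (h : x ≤ y) : Real.arccos y ≤ Real.arccos x := by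
  unfold Real.arccos
  exact sub_le_sub_left (Real.monotone_arcsin h) _

/-- Triangle inequality for the angle, all vectors unit. -/
lemma vangle_triangle {x y z : Fin 3 → ℝ} (hx : norm3 x = 1) (hy : norm3 y = 1)
    (hz : norm3 z = 1) : vangle x z ≤ vangle x y + vangle y z := by
  rcases le_or_gt (vangle x y + vangle y z) Real.pi with hle | hlt
  swap
  · exact le_trans (vangle_le_pi x z) hlt.le
  have hd1 := dot3_le_one hx hy
  have he1 := dot3_le_one hy hz
  have hcosb : Real.cos (vangle x y) = dot3 x y := cos_vangle hx hy
  have hcosg : Real.cos (vangle y z) = dot3 y z := cos_vangle hy hz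
  have hsinb : Real.sin (vangle x y) = Real.sqrt (1 - dot3 x y ^ 2) := by
    rw [vangle_of_unit hx hy, Real.sin_arccos]
  have hsing : Real.sin (vangle y z) = Real.sqrt (1 - dot3 y z ^ 2) := by
    rw [vangle_of_unit hy hz, Real.sin_arccos]
  have hyy : dot3 y y = 1 := dot3_self_of_unit hy
  have hxyc : dot3 x y = dot3 y x := dot3_comm x y
  have hp : dot3 (x - dot3 x y • y) (x - dot3 x y • y) = 1 - dot3 x y ^ 2 := by
    rw [dot3_expand, hyy, dot3_self_of_unit hx, ← hxyc]; ring
  have hq : dot3 (z - dot3 y z • y) (z - dot3 y z • y) = 1 - dot3 y z ^ 2 := by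
    rw [dot3_expand, hyy, dot3_self_of_unit hz, dot3_comm z y]; ring
  have hpq : dot3 (x - dot3 x y • y) (z - dot3 y z • y) = dot3 x z - dot3 x y * dot3 y z := by
    rw [dot3_expand, hyy, dot3_comm y z]; ring
  have hcs := dot3_cauchy (x - dot3 x y • y) (z - dot3 y z • y)
  rw [hpq, norm3, norm3, hp, hq] at hcs
  have key : dot3 x z - dot3 x y * dot3 y z ≥
      -(Real.sqrt (1 - dot3 x y ^ 2) * Real.sqrt (1 - dot3 y z ^ 2)) := by
    rw [← Real.sqrt_mul (by nlinarith [abs_le.1 hd1] : (0:ℝ) ≤ 1 - dot3 x y ^ 2)] at hcs ⊢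
    linarith [abs_le.1 hcs]
  have hcos_add : Real.cos (vangle x y + vangle y z) ≤ dot3 x z := by
    rw [Real.cos_add, hcosb, hcosg, hsinb, hsing]; linarith [key]
  rw [vangle_of_unit hx hz]
  calc Real.arccos (dot3 x z) ≤ Real.arccos (Real.cos (vangle x y + vangle y z)) :=
        arccos_le_arccos' hcos_add
    _ = vangle x y + vangle y z :=
        Real.arccos_cos (add_nonneg (vangle_nonneg x y) (vangle_nonneg y z)) hle

lemma dot3_eq (u w : Fin 3 → ℝ) : dot3 u w = u ⬝ᵥ w := rfl

lemma crossMat_transpose (b : Fin 3 → ℝ) : (crossMat b)ᵀ = -crossMat b := by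
  ext i j; fin_cases i <;> fin_cases j <;> simp [crossMat]

lemma crossMat_smul (t : ℝ) (b : Fin 3 → ℝ) : t • crossMat b = crossMat (t • b) := by
  ext i j; fin_cases i <;> fin_cases j <;> simp [crossMat] <;> ring

lemma crossMat_sub (a b : Fin 3 → ℝ) : crossMat a - crossMat b = crossMat (a - b) := by
  ext i j; fin_cases i <;> fin_cases j <;> simp [crossMat] <;> ring

lemma rot_orthog (a : Fin 3 → ℝ) : (axisAngleRot a)ᵀ * axisAngleRot a = 1 := by
  rw [axisAngleRot, ← Matrix.exp_transpose, crossMat_transpose,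
    ← Matrix.exp_add_of_commute _ _ (Commute.neg_left (Commute.refl (crossMat a))),
    neg_add_cancel, NormedSpace.exp_zero]

lemma rot_dot (a : Fin 3 → ℝ) (x y : Fin 3 → ℝ) :
    dot3 ((axisAngleRot a).mulVec x) ((axisAngleRot a).mulVec y) = dot3 x y := by
  rw [dot3_eq, dot3_eq, Matrix.dotProduct_mulVec, ← Matrix.mulVec_transpose,
    Matrix.mulVec_mulVec, rot_orthog, Matrix.one_mulVec]

lemma rot_norm3 (a : Fin 3 → ℝ) (x : Fin 3 → ℝ) :
    norm3 ((axisAngleRot a).mulVec x) = norm3 x := by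
  rw [norm3, rot_dot, norm3]

lemma crossMat_mulVec (c w : Fin 3 → ℝ) :
    (crossMat c).mulVec w =
      ![c 1 * w 2 - c 2 * w 1, c 2 * w 0 - c 0 * w 2, c 0 * w 1 - c 1 * w 0] := by
  funext i
  fin_cases i <;>
    simp [crossMat, Matrix.mulVec, dotProduct, Fin.sum_univ_three] <;> ring

lemma crossMat_mulVec_dot (c w : Fin 3 → ℝ) :
    dot3 ((crossMat c).mulVec w) ((crossMat c).mulVec w) ≤ dot3 c c * dot3 w w := by
  rw [crossMat_mulVec]
  simp only [dot3, Fin.sum_univ_three, Matrix.cons_val_zero, Matrix.cons_val_one,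
    Matrix.head_cons, Matrix.cons_val_two, Matrix.tail_cons]
  nlinarith [sq_nonneg (c 0 * w 0 + c 1 * w 1 + c 2 * w 2)]

lemma crossMat_mulVec_norm3 (c w : Fin 3 → ℝ) :
    norm3 ((crossMat c).mulVec w) ≤ norm3 c * norm3 w := by
  rw [norm3, norm3, norm3, ← Real.sqrt_mul (dot3_self_nonneg c)]
  exact Real.sqrt_le_sqrt (crossMat_mulVec_dot c w)

lemma norm3_eq_norm (x : Fin 3 → ℝ) :
    norm3 x = ‖(EuclideanSpace.equiv (Fin 3) ℝ).symm x‖ := by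
  rw [EuclideanSpace.norm_eq, norm3, dot3]
  congr 1
  refine Finset.sum_congr rfl fun i _ => ?_
  rw [show ((EuclideanSpace.equiv (Fin 3) ℝ).symm x) i = x i from rfl,
    Real.norm_eq_abs, sq_abs, sq]

lemma exp_smul_crossMat (t : ℝ) (a : Fin 3 → ℝ) :
    NormedSpace.exp (t • crossMat a) = axisAngleRot (t • a) := by
  rw [crossMat_smul]; rfl

lemma chord_bound (a b w : Fin 3 → ℝ) :
    norm3 ((axisAngleRot a).mulVec w - (axisAngleRot b).mulVec w)
      ≤ norm3 (a - b) * norm3 w := by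
  letI : SeminormedRing (Matrix (Fin 3) (Fin 3) ℝ) := Matrix.linftyOpSemiNormedRing
  letI : NormedRing (Matrix (Fin 3) (Fin 3) ℝ) := Matrix.linftyOpNormedRing
  letI : NormedAlgebra ℝ (Matrix (Fin 3) (Fin 3) ℝ) := Matrix.linftyOpNormedAlgebra
  set S := crossMat a with hS
  set T := crossMat b with hT
  set E := EuclideanSpace ℝ (Fin 3)
  let eqv : (Fin 3 → ℝ) ≃L[ℝ] E := (EuclideanSpace.equiv (Fin 3) ℝ).symm
  let L : Matrix (Fin 3) (Fin 3) ℝ →ₗ[ℝ] E :=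
    { toFun := fun M => eqv (M.mulVec w)
      map_add' := by intro M N; simp [Matrix.add_mulVec, map_add]
      map_smul' := by intro c M; simp [Matrix.smul_mulVec] }
  let Lc : Matrix (Fin 3) (Fin 3) ℝ →L[ℝ] E := LinearMap.toContinuousLinearMap L
  let F : ℝ → Matrix (Fin 3) (Fin 3) ℝ :=
    fun t => NormedSpace.exp (t • S) * NormedSpace.exp ((1 - t) • T)
  let D : ℝ → Matrix (Fin 3) (Fin 3) ℝ :=
    fun t => NormedSpace.exp (t • S) * (S - T) * NormedSpace.exp ((1 - t) • T)
  have hF : ∀ t : ℝ, HasDerivAt F (D t) t := by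
    intro t
    have hM : HasDerivAt (fun u : ℝ => NormedSpace.exp (u • S))
        (NormedSpace.exp (t • S) * S) t := hasDerivAt_exp_smul_const S t
    have h1 : HasDerivAt (fun u : ℝ => 1 - u) (-1) t := by
      simpa using (hasDerivAt_id t).const_sub 1
    have hN : HasDerivAt (fun u : ℝ => NormedSpace.exp ((1 - u) • T))
        (-(NormedSpace.exp ((1 - t) • T) * T)) t := by
      have h2 : HasDerivAt (fun v : ℝ => NormedSpace.exp (v • T))
          (NormedSpace.exp ((1 - t) • T) * T) (1 - t) := hasDerivAt_exp_smul_const T (1 - t)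
      have h3 : HasDerivAt ((fun v : ℝ => NormedSpace.exp (v • T)) ∘ fun u : ℝ => 1 - u)
          ((-1 : ℝ) • (NormedSpace.exp ((1 - t) • T) * T)) t :=
        HasDerivAt.scomp_of_eq t h2 h1 rfl
      have h4 : (-(NormedSpace.exp ((1 - t) • T) * T)) =
          (-1 : ℝ) • (NormedSpace.exp ((1 - t) • T) * T) := by
        rw [neg_one_smul]
      rw [h4]
      exact h3
    have := hM.mul hN
    refine this.congr_deriv ?_
    symm
    have hc : NormedSpace.exp ((1 - t) • T) * T = T * NormedSpace.exp ((1 - t) • T) :=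
      (((Commute.refl T).smul_left (1 - t)).exp_left).eq
    show NormedSpace.exp (t • S) * (S - T) * NormedSpace.exp ((1 - t) • T) = _
    rw [hc]
    noncomm_ring
  have hψ : ∀ t : ℝ, HasDerivAt (fun u => Lc (F u)) (Lc (D t)) t := fun t =>
    (Lc.hasFDerivAt.comp_hasDerivAt t (hF t))
  have hbound : ∀ t : ℝ, ‖Lc (D t)‖ ≤ norm3 (a - b) * norm3 w := by
    intro t
    have h0 : Lc (D t) = eqv ((D t).mulVec w) := rfl
    have h1 : (D t).mulVec w =
        (axisAngleRot (t • a)).mulVec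
          ((crossMat (a - b)).mulVec ((axisAngleRot ((1 - t) • b)).mulVec w)) := by
      simp only [D, ← Matrix.mulVec_mulVec, exp_smul_crossMat, hS, hT, crossMat_sub]
    rw [h0, ← norm3_eq_norm, h1, rot_norm3]
    calc norm3 ((crossMat (a - b)).mulVec ((axisAngleRot ((1 - t) • b)).mulVec w))
        ≤ norm3 (a - b) * norm3 ((axisAngleRot ((1 - t) • b)).mulVec w) :=
          crossMat_mulVec_norm3 _ _
      _ = norm3 (a - b) * norm3 w := by rw [rot_norm3]
  have key := norm_image_sub_le_of_norm_deriv_le_segment'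
    (f := fun u => Lc (F u)) (f' := fun t => Lc (D t)) (a := (0:ℝ)) (b := (1:ℝ))
    (C := norm3 (a - b) * norm3 w)
    (fun x _ => (hψ x).hasDerivWithinAt) (fun x _ => hbound x) 1 (by norm_num)
  have hF1 : F 1 = axisAngleRot a := by
    simp only [F, one_smul, sub_self, zero_smul, NormedSpace.exp_zero, mul_one]; rfl
  have hF0 : F 0 = axisAngleRot b := by
    simp only [F, zero_smul, sub_zero, one_smul, NormedSpace.exp_zero, one_mul]; rfl
  have key' : ‖Lc (F 1) - Lc (F 0)‖ ≤ norm3 (a - b) * norm3 w * (1 - 0) := key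
  rw [hF1, hF0] at key'
  have : Lc ((axisAngleRot a)) - Lc (axisAngleRot b) =
      eqv ((axisAngleRot a).mulVec w - (axisAngleRot b).mulVec w) := by
    simp [Lc, L, Matrix.sub_mulVec]
  calc norm3 ((axisAngleRot a).mulVec w - (axisAngleRot b).mulVec w)
      = ‖Lc (axisAngleRot a) - Lc (axisAngleRot b)‖ := by rw [this, norm3_eq_norm]
    _ ≤ norm3 (a - b) * norm3 w * (1 - 0) := key'
    _ = norm3 (a - b) * norm3 w := by ring

lemma norm3_sub_comm (x y : Fin 3 → ℝ) : norm3 (x - y) = norm3 (y - x) := by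
  unfold norm3; congr 1
  simp only [dot3, Fin.sum_univ_three, Pi.sub_apply]; ring

lemma vangle_self_unit {u : Fin 3 → ℝ} (hu : norm3 u = 1) : vangle u u = 0 := by
  rw [vangle_of_unit hu hu, dot3_self_of_unit hu, Real.arccos_one]

lemma rot_unit (a : Fin 3 → ℝ) {x : Fin 3 → ℝ} (hx : norm3 x = 1) :
    norm3 ((axisAngleRot a).mulVec x) = 1 := by rw [rot_norm3, hx]

lemma vangle_le_two_arcsin {u w : Fin 3 → ℝ} (hu : norm3 u = 1) (hw : norm3 w = 1)
    {y : ℝ} (hy : 0 ≤ y) (h : norm3 (u - w) ≤ 2 * y) :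
    vangle u w ≤ 2 * Real.arcsin y := by
  rcases le_or_gt 1 y with h1 | h1
  · calc vangle u w ≤ Real.pi := vangle_le_pi u w
      _ = 2 * Real.arcsin 1 := by rw [Real.arcsin_one]; ring
      _ ≤ 2 * Real.arcsin y := by
          have := Real.monotone_arcsin h1; linarith
  · have hc0 : 0 ≤ norm3 (u - w) := norm3_nonneg _
    have hdot : dot3 u w = 1 - norm3 (u - w) ^ 2 / 2 := by
      have hexp : dot3 (u - (1:ℝ) • w) (u - (1:ℝ) • w) =
          dot3 u u - 1 * dot3 u w - 1 * dot3 w u + 1 * 1 * dot3 w w := dot3_expand u w u 1 1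
      rw [one_smul] at hexp
      rw [sq_norm3, hexp, dot3_self_of_unit hu, dot3_self_of_unit hw, dot3_comm w u]
      ring
    set c := norm3 (u - w) with hc
    have hcy : c / 2 ≤ y := by linarith
    have hcy1 : c / 2 < 1 := lt_of_le_of_lt hcy h1
    set θ := Real.arcsin (c / 2) with hθ
    have hsin : Real.sin θ = c / 2 := Real.sin_arcsin (by linarith) (by linarith)
    have hθ0 : 0 ≤ θ := Real.arcsin_nonneg.2 (by linarith)
    have hθpi : θ ≤ Real.pi / 2 := Real.arcsin_le_pi_div_two _
    have hcos2 : Real.cos (2 * θ) = 1 - c ^ 2 / 2 := by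
      rw [Real.cos_two_mul]
      have hpyth := Real.sin_sq_add_cos_sq θ
      nlinarith [hsin]
    have : vangle u w = 2 * θ := by
      rw [vangle_of_unit hu hw, hdot, ← hcos2,
        Real.arccos_cos (by linarith) (by linarith)]
    rw [this]
    have := Real.monotone_arcsin hcy
    linarith

lemma vangle_rot_le (a b : Fin 3 → ℝ) {x : Fin 3 → ℝ} (hx : norm3 x = 1) :
    vangle ((axisAngleRot a).mulVec x) ((axisAngleRot b).mulVec x) ≤ norm3 (a - b) := by
  set L := norm3 (a - b) with hL
  have hL0 : 0 ≤ L := norm3_nonneg _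
  -- subdivision bound for each N ≥ 1
  have key : ∀ N : ℕ, 0 < N →
      vangle ((axisAngleRot a).mulVec x) ((axisAngleRot b).mulVec x)
        ≤ (N : ℝ) * (2 * Real.arcsin (L / (2 * N))) := by
    intro N hN
    have hNR : (0:ℝ) < N := by exact_mod_cast hN
    set c : ℕ → Fin 3 → ℝ := fun i => a + ((i : ℝ) / N) • (b - a) with hcdef
    set u : ℕ → Fin 3 → ℝ := fun i => (axisAngleRot (c i)).mulVec x with hudef
    have huu : ∀ i, norm3 (u i) = 1 := fun i => rot_unit _ hx
    have hstep : ∀ i : ℕ, vangle (u i) (u (i + 1)) ≤ 2 * Real.arcsin (L / (2 * N)) := by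
      intro i
      have hdiff : c i - c (i + 1) = -((1 : ℝ) / N) • (b - a) := by
        funext m
        simp only [hcdef, Pi.sub_apply, Pi.add_apply, Pi.smul_apply, Pi.neg_apply,
          smul_eq_mul]
        push_cast
        field_simp
        ring
      have hchord : norm3 (u i - u (i + 1)) ≤ L / N := by
        calc norm3 (u i - u (i + 1)) ≤ norm3 (c i - c (i + 1)) * norm3 x :=
              chord_bound _ _ _
          _ = norm3 (c i - c (i + 1)) := by rw [hx, mul_one]
          _ = L / N := by
              rw [hdiff, norm3, dot3]
              have : ∀ m : Fin 3, (-((1:ℝ)/N) • (b - a)) m = (1/N) * (a m - b m) := by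
                intro m
                simp only [Pi.smul_apply, Pi.sub_apply, smul_eq_mul]
                field_simp; ring
              simp only [this]
              rw [show ∑ m : Fin 3, (1/(N:ℝ)) * (a m - b m) * ((1/(N:ℝ)) * (a m - b m)) =
                  (1/(N:ℝ))^2 * ∑ m : Fin 3, (a m - b m) * (a m - b m) by
                    simp [Fin.sum_univ_three]; ring]
              rw [Real.sqrt_mul (by positivity), Real.sqrt_sq (by positivity)]
              rw [hL, norm3, dot3]
              simp only [Pi.sub_apply]
              ring
      have hy0 : 0 ≤ L / (2 * N) := by positivity
      refine vangle_le_two_arcsin (huu i) (huu (i + 1)) hy0 ?_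
      calc norm3 (u i - u (i + 1)) ≤ L / N := hchord
        _ = 2 * (L / (2 * N)) := by field_simp
    have hind : ∀ m : ℕ, vangle (u 0) (u m) ≤ (m : ℝ) * (2 * Real.arcsin (L / (2 * N))) := by
      intro m
      induction m with
      | zero => simp [vangle_self_unit (huu 0)]
      | succ m ih =>
          have htri := vangle_triangle (huu 0) (huu m) (huu (m + 1))
          have := hstep m
          push_cast
          push_cast at ih
          linarith
    have hu0 : u 0 = (axisAngleRot a).mulVec x := by
      simp only [hudef, hcdef]
      norm_num
    have huN : u N = (axisAngleRot b).mulVec x := by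
      have : c N = b := by
        funext m
        simp only [hcdef, Pi.add_apply, Pi.smul_apply, Pi.sub_apply, smul_eq_mul]
        rw [div_self (ne_of_gt hNR)]
        ring
      simp only [hudef, this]
    have := hind N
    rwa [hu0, huN] at this
  rcases eq_or_lt_of_le hL0 with hL0' | hLpos
  · have h1 := key 1 one_pos
    rw [← hL0'] at h1 ⊢
    simpa using h1
  · -- limit argument
    have hslope : Filter.Tendsto (fun y : ℝ => Real.arcsin y / y) (nhdsWithin 0 {0}ᶜ) (nhds 1) := by
      have hd : HasDerivAt Real.arcsin 1 0 := by
        have := Real.hasDerivAt_arcsin (by norm_num : (0:ℝ) ≠ -1) (by norm_num : (0:ℝ) ≠ 1)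
        simpa using this
      have := hasDerivAt_iff_tendsto_slope.1 hd
      refine this.congr' ?_
      filter_upwards [self_mem_nhdsWithin] with y hy
      simp [slope_def_field, Real.arcsin_zero]
    have h0 : Filter.Tendsto (fun N : ℕ => L / (2 * (N:ℝ))) Filter.atTop (nhds 0) := by
      have := tendsto_const_div_atTop_nhds_zero_nat (L / 2)
      refine this.congr fun N => ?_
      rw [div_div]
    have hyN : Filter.Tendsto (fun N : ℕ => L / (2 * (N:ℝ))) Filter.atTop
        (nhdsWithin 0 {0}ᶜ) := by
      refine tendsto_nhdsWithin_iff.2 ⟨h0, ?_⟩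
      filter_upwards [Filter.eventually_gt_atTop 0] with N hN
      have hNR : (0:ℝ) < N := by exact_mod_cast hN
      have : L / (2 * (N:ℝ)) > 0 := by positivity
      simp [ne_of_gt this]
    have hcomp := hslope.comp hyN
    have hfin : Filter.Tendsto (fun N : ℕ => (N : ℝ) * (2 * Real.arcsin (L / (2 * N))))
        Filter.atTop (nhds L) := by
      have h1 := hcomp.const_mul L
      rw [mul_one] at h1
      refine h1.congr' ?_
      filter_upwards [Filter.eventually_gt_atTop 0] with N hN
      have hNR : (0:ℝ) < N := by exact_mod_cast hN
      have hyne : L / (2 * (N:ℝ)) ≠ 0 := by positivity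
      simp only [Function.comp_apply]
      field_simp
    refine ge_of_tendsto hfin ?_
    filter_upwards [Filter.eventually_gt_atTop 0] with N hN
    exact key N hN

lemma vangle_diff_le {x u u' : Fin 3 → ℝ} (hx : norm3 x = 1) (hu : norm3 u = 1)
    (hu' : norm3 u' = 1) : |vangle x u' - vangle x u| ≤ vangle u u' := by
  have h1 := vangle_triangle hx hu hu'
  have h2 := vangle_triangle hx hu' hu
  rw [vangle_comm u' u] at h2
  rw [abs_le]
  constructor <;> linarith

/-- Inlier-counting objective: E(R) = Σ_j max_k ⟦|∠(n_j, R v_k) − π/2| ≤ ε⟧. -/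
noncomputable def inlierCount {J K : ℕ} (n : Fin J → Fin 3 → ℝ) (v : Fin K → Fin 3 → ℝ)
    (R : Matrix (Fin 3) (Fin 3) ℝ) (ε : ℝ) : ℕ :=
  ∑ j, Finset.univ.sup fun k => if |vangle (n j) (R.mulVec (v k)) - Real.pi / 2| ≤ ε then 1 else 0

/-- Pointwise relaxation and validity of the BnB upper bound: for every r in the
rotation cube of side δ centered at r₀, with μ = min(√3·δ/2, π),
(i) if ∠(R_r v_k, R_{r₀} v_k) ≤ μ and |∠(n_j, R_r v_k) − π/2| ≤ ε then
|∠(n_j, R_{r₀} v_k) − π/2| ≤ ε + μ, and (ii) E_U(r₀) ≥ E(R_r). -/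
theorem bnb_upper_bound {J K : ℕ} (n : Fin J → Fin 3 → ℝ) (v : Fin K → Fin 3 → ℝ)
    (hn : ∀ j, norm3 (n j) = 1) (hv : ∀ k, norm3 (v k) = 1)
    (ε δ μ : ℝ) (hε : 0 ≤ ε) (hμ : μ = min (Real.sqrt 3 * δ / 2) Real.pi)
    (r₀ : Fin 3 → ℝ) :
    (∀ (r : Fin 3 → ℝ) (j : Fin J) (k : Fin K),
        vangle ((axisAngleRot r).mulVec (v k)) ((axisAngleRot r₀).mulVec (v k)) ≤ μ →
        |vangle (n j) ((axisAngleRot r).mulVec (v k)) - Real.pi / 2| ≤ ε →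
        |vangle (n j) ((axisAngleRot r₀).mulVec (v k)) - Real.pi / 2| ≤ ε + μ) ∧
    (∀ r : Fin 3 → ℝ, (∀ i, |r i - r₀ i| ≤ δ / 2) →
        inlierCount n v (axisAngleRot r) ε ≤ inlierCount n v (axisAngleRot r₀) (ε + μ)) := by
  have part1 : ∀ (r : Fin 3 → ℝ) (j : Fin J) (k : Fin K),
      vangle ((axisAngleRot r).mulVec (v k)) ((axisAngleRot r₀).mulVec (v k)) ≤ μ →
      |vangle (n j) ((axisAngleRot r).mulVec (v k)) - Real.pi / 2| ≤ ε →
      |vangle (n j) ((axisAngleRot r₀).mulVec (v k)) - Real.pi / 2| ≤ ε + μ := by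
    intro r j k hang hin
    have hu : norm3 ((axisAngleRot r).mulVec (v k)) = 1 := rot_unit _ (hv k)
    have hu' : norm3 ((axisAngleRot r₀).mulVec (v k)) = 1 := rot_unit _ (hv k)
    have hdiff := vangle_diff_le (hn j) hu hu'
    have h1 := abs_le.1 hdiff
    have h2 := abs_le.1 hin
    rw [abs_le]
    constructor <;> [skip; skip] <;>
      · obtain ⟨ha, hb⟩ := h1; obtain ⟨hc, hd⟩ := h2
        first
        | linarith
        | linarith
  refine ⟨part1, ?_⟩
  intro r hr
  -- δ must be nonnegative
  rcases lt_or_ge δ 0 with hδ | hδ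
  · exfalso
    have := hr 0
    have h0 := abs_nonneg (r 0 - r₀ 0)
    linarith
  have hnorm : norm3 (r - r₀) ≤ Real.sqrt 3 * δ / 2 := by
    have hdot : dot3 (r - r₀) (r - r₀) ≤ 3 * (δ / 2) ^ 2 := by
      have h0 := sq_le_sq' (by linarith [abs_le.1 (hr 0)]) (abs_le.1 (hr 0)).2
      have h1 := sq_le_sq' (by linarith [abs_le.1 (hr 1)]) (abs_le.1 (hr 1)).2
      have h2 := sq_le_sq' (by linarith [abs_le.1 (hr 2)]) (abs_le.1 (hr 2)).2
      simp only [dot3, Fin.sum_univ_three, Pi.sub_apply, ← sq]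
      linarith
    calc norm3 (r - r₀) ≤ Real.sqrt (3 * (δ / 2) ^ 2) := Real.sqrt_le_sqrt hdot
      _ = Real.sqrt 3 * δ / 2 := by
          rw [Real.sqrt_mul (by norm_num), Real.sqrt_sq (by linarith)]
          ring
  have hang : ∀ k : Fin K,
      vangle ((axisAngleRot r).mulVec (v k)) ((axisAngleRot r₀).mulVec (v k)) ≤ μ := by
    intro k
    rw [hμ]
    refine le_min ?_ (vangle_le_pi _ _)
    calc vangle ((axisAngleRot r).mulVec (v k)) ((axisAngleRot r₀).mulVec (v k))
        ≤ norm3 (r - r₀) := vangle_rot_le r r₀ (hv k)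
      _ ≤ Real.sqrt 3 * δ / 2 := hnorm
  unfold inlierCount
  refine Finset.sum_le_sum fun j _ => ?_
  refine Finset.sup_mono_fun fun k _ => ?_
  by_cases hcase : |vangle (n j) ((axisAngleRot r).mulVec (v k)) - Real.pi / 2| ≤ ε
  · rw [if_pos hcase, if_pos (part1 r j k (hang k) hcase)]
  · rw [if_neg hcase]
    exact Nat.zero_le _
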